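/- If a subshift X contains a left-k-periodic point x ∈ Q_k whose σ-orbit is dense in X, then the kernel of the induced Aut(X)-action on Q_k is exactly the subgroup ⟨σ⟩ generated by the shift. -/

import Mathlib

def shift {A : Type*} (x : ℤ → A) : ℤ → A := fun n => x (n + 1)

def shiftIter {A : Type*} (i : ℤ) (x : ℤ → A) : ℤ → A := fun n => x (n + i)

def Qset {A : Type*} (X : Set (ℤ → A)) (k : ℕ) : Set (ℤ → A) :=
  {x | x ∈ X ∧ (∀ n : ℤ, n < k → x n = x (n - k)) ∧ x (k : ℤ) ≠ x ((k : ℤ) - k) ∧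
    ∀ k' : ℕ, 0 < k' → k' < k → ¬ ∀ n : ℤ, n < k → x n = x (n - k')}

def CommutesWithShift {A : Type*} [TopologicalSpace A] (X : Set (ℤ → A)) (g : X ≃ₜ X) : Prop :=
  ∀ (x : X) (hs : shift (x : ℤ → A) ∈ X),
    ((g ⟨shift (x : ℤ → A), hs⟩ : X) : ℤ → A) = shift ((g x : X) : ℤ → A)

lemma shiftIter_shiftIter {A : Type*} (a b : ℤ) (x : ℤ → A) :
    shiftIter a (shiftIter b x) = shiftIter (a + b) x := by
  funext n
  show x (n + a + b) = x (n + (a + b))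
  congr 1; ring

lemma shiftIter_zero {A : Type*} (x : ℤ → A) : shiftIter 0 x = x := by
  funext n; show x (n + 0) = x n; congr 1; ring

lemma shift_shiftIter {A : Type*} (i : ℤ) (w : ℤ → A) :
    shift (shiftIter i w) = shiftIter (i + 1) w := by
  funext n
  show w (n + 1 + i) = w (n + (i + 1))
  congr 1; ring

lemma shift_injective {A : Type*} : Function.Injective (shift (A := A)) := by
  intro a b h
  funext n
  have h1 : a (n - 1 + 1) = b (n - 1 + 1) := congrFun h (n - 1)
  have e : n - 1 + 1 = n := by ring
  rwa [e] at h1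

lemma qaux {A : Type*} {X : Set (ℤ → A)} {k : ℕ} {y : ℤ → A}
    (hy : y ∈ Qset X k) {m : ℤ} (hm : shiftIter m y ∈ Qset X k) : ¬ m < 0 := by
  intro hneg
  obtain ⟨-, h1, -, -⟩ := hy
  obtain ⟨-, -, h2, -⟩ := hm
  apply h2
  show y ((k : ℤ) + m) = y ((k : ℤ) - k + m)
  rw [h1 ((k : ℤ) + m) (by omega)]
  congr 1; ring

lemma qzero {A : Type*} {X : Set (ℤ → A)} {k : ℕ} {x : ℤ → A} {m : ℤ}
    (hx : x ∈ Qset X k) (hm : shiftIter m x ∈ Qset X k) : m = 0 := by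
  rcases lt_trichotomy m 0 with h | h | h
  · exact absurd h (qaux hx hm)
  · exact h
  · exfalso
    have h2 : shiftIter (-m) (shiftIter m x) ∈ Qset X k := by
      rw [shiftIter_shiftIter]
      have e : -m + m = 0 := by ring
      rwa [e, shiftIter_zero]
    exact qaux hm h2 (by omega)

/-- If `Q_k` contains a point with dense `σ`-orbit, the kernel of the induced
`Aut(X)`-action on `Q_k` is exactly `⟨σ⟩`. -/
theorem stmt10 {A : Type*} [Fintype A] [TopologicalSpace A] [DiscreteTopology A]
    (X : Set (ℤ → A)) (hcl : IsClosed X)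
    (hinv : ∀ x ∈ X, shift x ∈ X) (hinv' : ∀ x ∈ X, (fun n : ℤ => x (n - 1)) ∈ X)
    (k : ℕ) (hk : 0 < k)
    (α : (X ≃ₜ X) → (ℤ → A) → ℤ)
    (hα : ∀ g : X ≃ₜ X, CommutesWithShift X g → ∀ (x : ℤ → A) (hx : x ∈ Qset X k),
      shiftIter (α g x) ((g ⟨x, hx.1⟩ : X) : ℤ → A) ∈ Qset X k)
    (x₀ : ℤ → A) (hx₀ : x₀ ∈ Qset X k)
    (hdense : ∀ y ∈ X, y ∈ closure {z | ∃ i : ℤ, z = shiftIter i x₀}) :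
    ∀ g : X ≃ₜ X, CommutesWithShift X g →
      ((∀ (x : ℤ → A) (hx : x ∈ Qset X k),
          shiftIter (α g x) ((g ⟨x, hx.1⟩ : X) : ℤ → A) = x) ↔
        ∃ n : ℤ, ∀ y : X, ((g y : X) : ℤ → A) = shiftIter n (y : ℤ → A)) := by
  intro g hgc
  -- shift iterates stay in X
  have hXiter : ∀ (i : ℤ) (y : ℤ → A), y ∈ X → shiftIter i y ∈ X := by
    intro i
    induction i using Int.induction_on with
    | zero => intro y hy; rwa [shiftIter_zero]
    | succ i ih =>
      intro y hy
      rw [← shift_shiftIter]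
      exact hinv _ (ih y hy)
    | pred i ih =>
      intro y hy
      have e : shiftIter (-(i : ℤ) - 1) y = fun n => shiftIter (-(i : ℤ)) y (n - 1) := by
        funext n
        show y (n + (-(i : ℤ) - 1)) = y (n - 1 + -(i : ℤ))
        congr 1; ring
      rw [e]
      exact hinv' _ (ih y hy)
  -- g commutes with all shift iterates
  have hcomm : ∀ (i : ℤ) (y : ℤ → A) (hy : y ∈ X),
      ((g ⟨shiftIter i y, hXiter i y hy⟩ : X) : ℤ → A)
        = shiftIter i ((g ⟨y, hy⟩ : X) : ℤ → A) := by
    intro i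
    induction i using Int.induction_on with
    | zero =>
      intro y hy
      have e : (⟨shiftIter 0 y, hXiter 0 y hy⟩ : X) = ⟨y, hy⟩ :=
        Subtype.ext (shiftIter_zero y)
      rw [e, shiftIter_zero]
    | succ i ih =>
      intro y hy
      have hmem : shift (shiftIter (i : ℤ) y) ∈ X := by
        rw [shift_shiftIter]; exact hXiter _ y hy
      have e : (⟨shiftIter ((i : ℤ) + 1) y, hXiter _ y hy⟩ : X)
          = ⟨shift (shiftIter (i : ℤ) y), hmem⟩ :=
        Subtype.ext (shift_shiftIter (i : ℤ) y).symm
      rw [e, hgc ⟨shiftIter (i : ℤ) y, hXiter (i : ℤ) y hy⟩ hmem, ih y hy,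
        shift_shiftIter]
    | pred i ih =>
      intro y hy
      have hs : shift (shiftIter (-(i : ℤ) - 1) y) ∈ X := by
        rw [shift_shiftIter]
        have e : -(i : ℤ) - 1 + 1 = -(i : ℤ) := by ring
        rw [e]; exact hXiter _ y hy
      have h := hgc ⟨shiftIter (-(i : ℤ) - 1) y, hXiter (-(i : ℤ) - 1) y hy⟩ hs
      have e2 : (⟨shift (shiftIter (-(i : ℤ) - 1) y), hs⟩ : X)
          = ⟨shiftIter (-(i : ℤ)) y, hXiter (-(i : ℤ)) y hy⟩ := by
        apply Subtype.ext
        show shift (shiftIter (-(i : ℤ) - 1) y) = shiftIter (-(i : ℤ)) y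
        rw [shift_shiftIter]
        congr 1; ring
      rw [e2, ih y hy] at h
      apply shift_injective
      rw [← h, shift_shiftIter]
      congr 1; ring
  constructor
  · -- forward direction
    intro H
    set a := α g x₀ with ha
    have h0 : shiftIter a ((g ⟨x₀, hx₀.1⟩ : X) : ℤ → A) = x₀ := H x₀ hx₀
    have hg0 : ((g ⟨x₀, hx₀.1⟩ : X) : ℤ → A) = shiftIter (-a) x₀ := by
      have h1 := congrArg (shiftIter (-a)) h0
      rw [shiftIter_shiftIter] at h1
      have e : -a + a = 0 := by ring
      rw [e, shiftIter_zero] at h1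
      exact h1
    refine ⟨-a, ?_⟩
    intro y
    set O : Set (ℤ → A) := {z | ∃ i : ℤ, z = shiftIter i x₀} with hO
    have hFcont : Continuous fun z : X => ((g z : X) : ℤ → A) :=
      continuous_subtype_val.comp g.continuous
    have hGcont : Continuous fun z : X => shiftIter (-a) (z : ℤ → A) := by
      apply continuous_pi
      intro m
      exact (continuous_apply (m + -a)).comp continuous_subtype_val
    have hScl : IsClosed {z : X | ((g z : X) : ℤ → A) = shiftIter (-a) (z : ℤ → A)} :=
      isClosed_eq hFcont hGcont
    have hOsub : (Subtype.val ⁻¹' O : Set X)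
        ⊆ {z : X | ((g z : X) : ℤ → A) = shiftIter (-a) (z : ℤ → A)} := by
      rintro ⟨z, hz⟩ ⟨i, rfl⟩
      show ((g ⟨shiftIter i x₀, hz⟩ : X) : ℤ → A) = shiftIter (-a) (shiftIter i x₀)
      have h2 : ((g ⟨shiftIter i x₀, hz⟩ : X) : ℤ → A)
          = shiftIter i ((g ⟨x₀, hx₀.1⟩ : X) : ℤ → A) := hcomm i x₀ hx₀.1
      rw [h2, hg0, shiftIter_shiftIter, shiftIter_shiftIter]
      congr 1; ring
    have hOX : O ⊆ X := by
      rintro z ⟨i, rfl⟩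
      exact hXiter i x₀ hx₀.1
    have hyc : y ∈ closure (Subtype.val ⁻¹' O : Set X) := by
      rw [closure_subtype, Set.image_preimage_eq_inter_range, Subtype.range_coe,
        Set.inter_eq_left.mpr hOX]
      exact hdense y y.2
    exact hScl.closure_subset ((closure_mono hOsub) hyc)
  · -- backward direction
    rintro ⟨n, hn⟩ x hx
    have hmem : shiftIter (α g x + n) x ∈ Qset X k := by
      have h := hα g hgc x hx
      rwa [hn ⟨x, hx.1⟩, shiftIter_shiftIter] at h
    rw [hn ⟨x, hx.1⟩, shiftIter_shiftIter, qzero hx hmem, shiftIter_zero]
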